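/- Let 2 ≤ k ≤ n and write n = kq + r with 0 ≤ r < k. Then there exists a k*-dense graph on n vertices with exactly q·C(k,2) + C(r,2) + r(k−r) edges. -/

import Mathlib

/-- A graph `G` is `k`-dense if every two adjacent vertices have at least `k - 2`
common neighbors. -/
def kDense {V : Type*} (G : SimpleGraph V) (k : ℕ) : Prop :=
  ∀ u v : V, G.Adj u v → k - 2 ≤ (G.neighborSet u ∩ G.neighborSet v).ncard

/-- A graph is `k*`-dense if it is `k`-dense but not `(k+1)`-dense. -/
def kStarDense {V : Type*} (G : SimpleGraph V) (k : ℕ) : Prop :=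
  kDense G k ∧ ¬ kDense G (k + 1)

/-- The witness graph: `q` blocks of size `k` that are cliques, where the last `r` leftover
vertices are merged into the last block, forming `K_{k+r}` minus a complete bipartite graph
between the leftover vertices and the last `r` vertices of the last block. -/
def dGraph (k q r n : ℕ) : SimpleGraph (Fin n) where
  Adj i j := i ≠ j ∧ min (i.val / k) (q-1) = min (j.val / k) (q-1)
    ∧ ¬(k*q - r ≤ i.val ∧ i.val < k*q ∧ k*q ≤ j.val)
    ∧ ¬(k*q - r ≤ j.val ∧ j.val < k*q ∧ k*q ≤ i.val)
  symm := ⟨by rintro i j ⟨h1,h2,h3,h4⟩; exact ⟨Ne.symm h1, h2.symm, h4, h3⟩⟩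
  loopless := ⟨fun i h => h.1 rfl⟩

instance (k q r n : ℕ) : DecidableRel (dGraph k q r n).Adj := fun i j => by
  dsimp [dGraph]; infer_instance

lemma adj_iff {k q r n : ℕ} {i j : Fin n} : (dGraph k q r n).Adj i j ↔
    (i ≠ j ∧ min (i.val / k) (q-1) = min (j.val / k) (q-1)
    ∧ ¬(k*q - r ≤ i.val ∧ i.val < k*q ∧ k*q ≤ j.val)
    ∧ ¬(k*q - r ≤ j.val ∧ j.val < k*q ∧ k*q ≤ i.val)) := Iff.rfl

lemma blk_last {k q a : ℕ} (hk : 0 < k) : min (a/k) (q-1) = q-1 ↔ k*(q-1) ≤ a := by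
  rw [min_eq_right_iff, Nat.le_div_iff_mul_le hk, mul_comm]

lemma blk_mid {k q a c : ℕ} (hk : 0 < k) (hc : c + 1 < q) :
    min (a/k) (q-1) = c ↔ k*c ≤ a ∧ a < k*c + k := by
  have h1 : c ≤ a/k ↔ k*c ≤ a := by rw [Nat.le_div_iff_mul_le hk, mul_comm]
  have h2 : a/k < c+1 ↔ a < k*c + k := by
    rw [Nat.div_lt_iff_lt_mul hk]; constructor <;> intro h <;> nlinarith
  omega

def IcoF (n a b : ℕ) : Finset (Fin n) := Finset.univ.filter (fun j => a ≤ j.val ∧ j.val < b)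

lemma mem_IcoF {n a b : ℕ} {j : Fin n} : j ∈ IcoF n a b ↔ a ≤ j.val ∧ j.val < b := by
  simp [IcoF]

lemma card_IcoF {n a b : ℕ} (hb : b ≤ n) : (IcoF n a b).card = b - a := by
  rw [show IcoF n a b = (Finset.Ico a b).attachFin
      (fun m hm => (Finset.mem_Ico.mp hm).2.trans_le hb) from ?_,
    Finset.card_attachFin, Nat.card_Ico]
  ext j; simp [IcoF, Finset.mem_attachFin, Finset.mem_Ico]

lemma ncard_inter_ge {n : ℕ} (G : SimpleGraph (Fin n)) (u v : Fin n) (S : Finset (Fin n))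
    (h : ∀ j ∈ S, G.Adj u j ∧ G.Adj v j) :
    S.card ≤ (G.neighborSet u ∩ G.neighborSet v).ncard := by
  have hsub : ↑S ⊆ (G.neighborSet u ∩ G.neighborSet v) := by
    intro j hj
    rw [Finset.mem_coe] at hj
    exact ⟨(h j hj).1, (h j hj).2⟩
  calc S.card = (↑S : Set (Fin n)).ncard := (Set.ncard_coe_finset S).symm
    _ ≤ _ := Set.ncard_le_ncard hsub (Set.toFinite _)

lemma deg_eq {k q r n : ℕ} (hk : 2 ≤ k) (hq : 1 ≤ q) (hr : r < k) (hn : n = k*q + r)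
    (v : Fin n) : (dGraph k q r n).degree v =
      if k*(q-1) ≤ v.val ∧ v.val < k*q - r then k + r - 1 else k - 1 := by
  have hk0 : 0 < k := by omega
  have hqk : k*(q-1) + k = k*q := by
    have h1 : q - 1 + 1 = q := by omega
    rw [← Nat.mul_succ, Nat.succ_eq_add_one, h1]
  have hjlt := v.isLt
  rw [SimpleGraph.degree, SimpleGraph.neighborFinset_eq_filter]
  by_cases h1 : v.val < k*(q-1)
  · -- interior block
    set c := v.val / k with hcdef
    have hc : c + 1 < q := by
      have : v.val / k < q - 1 := by
        rw [Nat.div_lt_iff_lt_mul hk0, mul_comm]; exact h1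
      omega
    have hvc : min (v.val/k) (q-1) = c := min_eq_left (by omega)
    have hlo : k*c ≤ v.val := by
      have := Nat.div_mul_le_self v.val k; rw [mul_comm]; exact this
    have hhi : v.val < k*c + k := by
      have h2 : v.val < (c+1)*k := (Nat.div_lt_iff_lt_mul hk0).mp (by omega)
      nlinarith
    have hckn : k*c + k ≤ k*(q-1) := by
      have h3 : c+1 ≤ q-1 := by omega
      have h2 := Nat.mul_le_mul_left k h3
      rw [Nat.mul_succ] at h2; exact h2
    have hset : Finset.univ.filter ((dGraph k q r n).Adj v)
        = (IcoF n (k*c) (k*c+k)).erase v := by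
      ext j
      have hjlt2 := j.isLt
      rw [Finset.mem_filter, adj_iff, hvc, Finset.mem_erase, mem_IcoF,
        show (c = min (j.val/k) (q-1)) ↔ (min (j.val/k) (q-1) = c) from eq_comm,
        blk_mid hk0 hc]
      simp only [ne_eq, Fin.ext_iff, Finset.mem_univ, true_and]
      omega
    rw [hset, Finset.card_erase_of_mem (mem_IcoF.mpr ⟨hlo, hhi⟩),
      card_IcoF (by omega), if_neg (by omega)]
    omega
  · push_neg at h1
    have hvlast : min (v.val/k) (q-1) = q-1 := (blk_last hk0).mpr h1
    by_cases h2 : v.val < k*q - r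
    · -- C \ T
      have hset : Finset.univ.filter ((dGraph k q r n).Adj v)
          = (IcoF n (k*(q-1)) n).erase v := by
        ext j
        have hjlt2 := j.isLt
        rw [Finset.mem_filter, adj_iff, hvlast, Finset.mem_erase, mem_IcoF,
          show ((q-1 : ℕ) = min (j.val/k) (q-1)) ↔ (min (j.val/k) (q-1) = q-1) from eq_comm,
          blk_last hk0]
        simp only [ne_eq, Fin.ext_iff, Finset.mem_univ, true_and]
        omega
      rw [hset, Finset.card_erase_of_mem (mem_IcoF.mpr ⟨h1, hjlt⟩),
        card_IcoF le_rfl, if_pos ⟨h1, h2⟩]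
      omega
    · push_neg at h2
      by_cases h3 : v.val < k*q
      · -- T
        have hset : Finset.univ.filter ((dGraph k q r n).Adj v)
            = (IcoF n (k*(q-1)) (k*q)).erase v := by
          ext j
          have hjlt2 := j.isLt
          rw [Finset.mem_filter, adj_iff, hvlast, Finset.mem_erase, mem_IcoF,
            show ((q-1 : ℕ) = min (j.val/k) (q-1)) ↔ (min (j.val/k) (q-1) = q-1) from eq_comm,
            blk_last hk0]
          simp only [ne_eq, Fin.ext_iff, Finset.mem_univ, true_and]
          omega
        rw [hset, Finset.card_erase_of_mem (mem_IcoF.mpr ⟨h1, h3⟩),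
          card_IcoF (by omega), if_neg (by omega)]
        omega
      · -- R
        push_neg at h3
        have hr1 : 1 ≤ r := by omega
        have hset : Finset.univ.filter ((dGraph k q r n).Adj v)
            = IcoF n (k*(q-1)) (k*q - r) ∪ (IcoF n (k*q) n).erase v := by
          ext j
          have hjlt2 := j.isLt
          rw [Finset.mem_filter, adj_iff, hvlast, Finset.mem_union, Finset.mem_erase,
            mem_IcoF, mem_IcoF,
            show ((q-1 : ℕ) = min (j.val/k) (q-1)) ↔ (min (j.val/k) (q-1) = q-1) from eq_comm,
            blk_last hk0]
          simp only [ne_eq, Fin.ext_iff, Finset.mem_univ, true_and]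
          omega
        have hdisj : Disjoint (IcoF n (k*(q-1)) (k*q - r)) ((IcoF n (k*q) n).erase v) := by
          simp only [Finset.disjoint_left, mem_IcoF, Finset.mem_erase]
          rintro x ⟨hx1, hx2⟩ ⟨-, hx3, -⟩; omega
        rw [hset, Finset.card_union_of_disjoint hdisj,
          Finset.card_erase_of_mem (mem_IcoF.mpr ⟨h3, hjlt⟩),
          card_IcoF (by omega), card_IcoF le_rfl, if_neg (by omega)]
        omega

lemma two_mul_choose_two (m : ℕ) : 2 * m.choose 2 = m * (m - 1) := by
  rw [Nat.choose_two_right, mul_comm, Nat.div_mul_cancel (Nat.even_mul_pred_self m).two_dvd]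

lemma arith_edges {k q r n : ℕ} (hk : 2 ≤ k) (hq : 1 ≤ q) (hr : r < k) (hn : n = k*q + r) :
    2 * (q * Nat.choose k 2 + Nat.choose r 2 + r * (k - r))
      = (k - r) * (k + r - 1) + (n - (k - r)) * (k - 1) := by
  obtain ⟨s, rfl⟩ : ∃ s, k = r + s + 1 := ⟨k - r - 1, by omega⟩
  obtain ⟨m, rfl⟩ : ∃ m, q = m + 1 := ⟨q - 1, by omega⟩
  subst hn
  have e1 : r + s + 1 - r = s + 1 := by omega
  have e2 : (r + s + 1) + r - 1 = 2*r + s := by omega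
  have e3 : (r + s + 1) - 1 = r + s := by omega
  have hexp : (r+s+1)*(m+1) = (r+s+1)*m + (r+s+1) := by ring
  have e4 : (r+s+1)*(m+1) + r - (s+1) = (r+s+1)*m + 2*r := by omega
  have h2k : 2 * Nat.choose (r+s+1) 2 = (r+s+1)*(r+s) := by
    rw [two_mul_choose_two, e3]
  have h2r : 2 * Nat.choose r 2 + r = r * r := by
    rcases r with _|r'
    · simp
    · rw [two_mul_choose_two, Nat.succ_sub_one]; ring
  rw [e1, e2, e3, e4]
  zify
  have h2k' : (2:ℤ) * (Nat.choose (r+s+1) 2 : ℤ) = ((r:ℤ)+s+1)*((r:ℤ)+s) := by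
    exact_mod_cast h2k
  have h2r' : (2:ℤ) * (Nat.choose r 2 : ℤ) + r = (r:ℤ) * r := by exact_mod_cast h2r
  linear_combination (m+1 : ℤ) * h2k' + h2r'

lemma edge_card {k q r n : ℕ} (hk : 2 ≤ k) (hq : 1 ≤ q) (hr : r < k) (hn : n = k*q + r) :
    (dGraph k q r n).edgeFinset.card
      = q * Nat.choose k 2 + Nat.choose r 2 + r * (k - r) := by
  have hqk : k*(q-1) + k = k*q := by
    have h1 : q - 1 + 1 = q := by omega
    rw [← Nat.mul_succ, Nat.succ_eq_add_one, h1]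
  have hsum := SimpleGraph.sum_degrees_eq_twice_card_edges (dGraph k q r n)
  have hP : (Finset.univ.filter
      (fun v : Fin n => k*(q-1) ≤ v.val ∧ v.val < k*q - r)).card = k - r := by
    rw [show Finset.univ.filter (fun v : Fin n => k*(q-1) ≤ v.val ∧ v.val < k*q - r)
        = IcoF n (k*(q-1)) (k*q - r) from rfl, card_IcoF (by omega)]
    omega
  have hPn := Finset.card_filter_add_card_filter_not
    (s := (Finset.univ : Finset (Fin n)))
    (p := fun v : Fin n => k*(q-1) ≤ v.val ∧ v.val < k*q - r)
  rw [Finset.card_univ, Fintype.card_fin] at hPn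
  have hdeg : ∑ v : Fin n, (dGraph k q r n).degree v
      = (k - r) * (k + r - 1) + (n - (k - r)) * (k - 1) := by
    rw [show ∑ v : Fin n, (dGraph k q r n).degree v
        = ∑ v : Fin n, (if k*(q-1) ≤ v.val ∧ v.val < k*q - r then k + r - 1 else k - 1)
        from Finset.sum_congr rfl (fun v _ => deg_eq hk hq hr hn v),
      Finset.sum_ite, Finset.sum_const, Finset.sum_const, smul_eq_mul, smul_eq_mul, hP]
    have : (Finset.univ.filter
        (fun v : Fin n => ¬(k*(q-1) ≤ v.val ∧ v.val < k*q - r))).card = n - (k - r) := by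
      omega
    rw [this]
  have harith := arith_edges hk hq hr hn
  omega


lemma caseA {k q r n : ℕ} (hk : 2 ≤ k) (hq : 1 ≤ q) (hr : r < k) (hn : n = k*q + r)
    {u v : Fin n} (huv : (dGraph k q r n).Adj u v)
    (ha : u.val < k*q) (hb : v.val < k*q) :
    k - 2 ≤ ((dGraph k q r n).neighborSet u ∩ (dGraph k q r n).neighborSet v).ncard := by
  have hk0 : 0 < k := by omega
  have hqk : k*(q-1) + k = k*q := by
    have h1 : q - 1 + 1 = q := by omega
    rw [← Nat.mul_succ, Nat.succ_eq_add_one, h1]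
  obtain ⟨hne, hblk, -, -⟩ := adj_iff.mp huv
  set c := u.val / k with hcdef
  have hcq : c + 1 ≤ q := by
    have : u.val / k < q := by rw [Nat.div_lt_iff_lt_mul hk0, mul_comm]; exact ha
    omega
  have hulo : k*c ≤ u.val := by
    have := Nat.div_mul_le_self u.val k; rw [mul_comm]; exact this
  have huhi : u.val < k*c + k := by
    have h2 : u.val < (c+1)*k := (Nat.div_lt_iff_lt_mul hk0).mp (by omega)
    nlinarith
  have hckq : k*c + k ≤ k*q := by
    have h2 := Nat.mul_le_mul_left k hcq
    rw [Nat.mul_succ] at h2; exact h2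
  have hblkj : ∀ a : ℕ, k*c ≤ a → a < k*c + k → min (a/k) (q-1) = min (u.val/k) (q-1) := by
    intro a h1 h2
    rcases lt_or_ge (c+1) q with hlt | hge
    · rw [(blk_mid hk0 hlt).mpr ⟨h1, h2⟩, (blk_mid hk0 hlt).mpr ⟨hulo, huhi⟩]
    · have hkc : k*c = k*(q-1) := by
        have : c = q - 1 := by omega
        rw [this]
      rw [(blk_last hk0).mpr (by omega), (blk_last hk0).mpr (by omega)]
  have hvio : k*c ≤ v.val ∧ v.val < k*c + k := by
    rcases lt_or_ge (c+1) q with hlt | hge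
    · have hu' : min (u.val/k) (q-1) = c := (blk_mid hk0 hlt).mpr ⟨hulo, huhi⟩
      rw [hblk] at hu'
      exact (blk_mid hk0 hlt).mp hu'
    · have hkc : k*c = k*(q-1) := by
        have : c = q - 1 := by omega
        rw [this]
      have hu' : min (u.val/k) (q-1) = q-1 := (blk_last hk0).mpr (by omega)
      rw [hblk] at hu'
      have := (blk_last hk0).mp hu'
      omega
  have hcard : (((IcoF n (k*c) (k*c+k)).erase u).erase v).card = k - 2 := by
    rw [Finset.card_erase_of_mem
        (Finset.mem_erase.mpr ⟨Ne.symm hne, mem_IcoF.mpr hvio⟩),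
      Finset.card_erase_of_mem (mem_IcoF.mpr ⟨hulo, huhi⟩), card_IcoF (by omega)]
    omega
  rw [← hcard]
  refine ncard_inter_ge _ _ _ _ ?_
  intro j hj
  rw [Finset.mem_erase, Finset.mem_erase, mem_IcoF] at hj
  obtain ⟨hjv, hju, hj1, hj2⟩ := hj
  constructor
  · exact adj_iff.mpr ⟨Ne.symm hju, (hblkj j.val hj1 hj2).symm, by omega, by omega⟩
  · refine adj_iff.mpr ⟨Ne.symm hjv, ?_, by omega, by omega⟩
    rw [← hblk]
    exact (hblkj j.val hj1 hj2).symm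

lemma caseB {k q r n : ℕ} (hk : 2 ≤ k) (hq : 1 ≤ q) (hr : r < k) (hn : n = k*q + r)
    {u v : Fin n} (huv : (dGraph k q r n).Adj u v)
    (ha : u.val < k*q) (hb : k*q ≤ v.val) :
    k - 2 ≤ ((dGraph k q r n).neighborSet u ∩ (dGraph k q r n).neighborSet v).ncard := by
  have hk0 : 0 < k := by omega
  have hqk : k*(q-1) + k = k*q := by
    have h1 : q - 1 + 1 = q := by omega
    rw [← Nat.mul_succ, Nat.succ_eq_add_one, h1]
  have hvlt := v.isLt
  have hr1 : 1 ≤ r := by omega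
  obtain ⟨hne, hblk, hF1, hF2⟩ := adj_iff.mp huv
  have huT : u.val < k*q - r := by omega
  have hvlast : min (v.val/k) (q-1) = q-1 := (blk_last hk0).mpr (by omega)
  have hulo : k*(q-1) ≤ u.val := by
    have := hblk.trans hvlast
    exact (blk_last hk0).mp this
  set S := ((IcoF n (k*(q-1)) (k*q - r)).erase u) ∪ ((IcoF n (k*q) n).erase v) with hS
  have hdisj : Disjoint ((IcoF n (k*(q-1)) (k*q - r)).erase u) ((IcoF n (k*q) n).erase v) := by
    simp only [Finset.disjoint_left, mem_IcoF, Finset.mem_erase]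
    rintro x ⟨-, hx1, hx2⟩ ⟨-, hx3, -⟩; omega
  have hcard : S.card = k - 2 := by
    rw [hS, Finset.card_union_of_disjoint hdisj,
      Finset.card_erase_of_mem (mem_IcoF.mpr ⟨hulo, huT⟩),
      Finset.card_erase_of_mem (mem_IcoF.mpr ⟨hb, hvlt⟩),
      card_IcoF (by omega), card_IcoF le_rfl]
    omega
  rw [← hcard]
  refine ncard_inter_ge _ _ _ _ ?_
  intro j hj
  rw [hS, Finset.mem_union, Finset.mem_erase, Finset.mem_erase, mem_IcoF, mem_IcoF] at hj
  have hjlast : min (j.val/k) (q-1) = q-1 := by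
    rcases hj with ⟨-, hj1, -⟩ | ⟨-, hj1, -⟩ <;> exact (blk_last hk0).mpr (by omega)
  rcases hj with ⟨hju, hj1, hj2⟩ | ⟨hjv, hj1, hj2⟩
  · constructor
    · exact adj_iff.mpr ⟨Ne.symm hju,
        ((blk_last hk0).mpr (by omega)).trans hjlast.symm, by omega, by omega⟩
    · refine adj_iff.mpr ⟨Fin.ne_of_val_ne (by omega), hvlast.trans hjlast.symm,
        by omega, by omega⟩
  · constructor
    · refine adj_iff.mpr ⟨Fin.ne_of_val_ne (by omega),
        ((blk_last hk0).mpr (by omega)).trans hjlast.symm, by omega, by omega⟩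
    · exact adj_iff.mpr ⟨Ne.symm hjv, hvlast.trans hjlast.symm, by omega, by omega⟩

lemma caseC {k q r n : ℕ} (hk : 2 ≤ k) (hq : 1 ≤ q) (hr : r < k) (hn : n = k*q + r)
    {u v : Fin n} (huv : (dGraph k q r n).Adj u v)
    (ha : k*q ≤ u.val) (hb : k*q ≤ v.val) :
    k - 2 ≤ ((dGraph k q r n).neighborSet u ∩ (dGraph k q r n).neighborSet v).ncard := by
  have hk0 : 0 < k := by omega
  have hqk : k*(q-1) + k = k*q := by
    have h1 : q - 1 + 1 = q := by omega
    rw [← Nat.mul_succ, Nat.succ_eq_add_one, h1]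
  have hvlt := v.isLt
  have hult := u.isLt
  obtain ⟨hne, hblk, hF1, hF2⟩ := adj_iff.mp huv
  have hne' : u.val ≠ v.val := Fin.val_ne_of_ne hne
  have hr2 : 2 ≤ r := by omega
  have hulast : min (u.val/k) (q-1) = q-1 := (blk_last hk0).mpr (by omega)
  have hvlast : min (v.val/k) (q-1) = q-1 := (blk_last hk0).mpr (by omega)
  set S := IcoF n (k*(q-1)) (k*q - r) ∪ ((IcoF n (k*q) n).erase u).erase v with hS
  have hdisj : Disjoint (IcoF n (k*(q-1)) (k*q - r)) (((IcoF n (k*q) n).erase u).erase v) := by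
    simp only [Finset.disjoint_left, mem_IcoF, Finset.mem_erase]
    rintro x ⟨hx1, hx2⟩ ⟨-, -, hx3, -⟩; omega
  have hcard : S.card = k - 2 := by
    rw [hS, Finset.card_union_of_disjoint hdisj,
      Finset.card_erase_of_mem
        (Finset.mem_erase.mpr ⟨Ne.symm hne, mem_IcoF.mpr ⟨hb, hvlt⟩⟩),
      Finset.card_erase_of_mem (mem_IcoF.mpr ⟨ha, hult⟩),
      card_IcoF (by omega), card_IcoF le_rfl]
    omega
  rw [← hcard]
  refine ncard_inter_ge _ _ _ _ ?_
  intro j hj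
  rw [hS, Finset.mem_union, Finset.mem_erase, Finset.mem_erase, mem_IcoF, mem_IcoF] at hj
  have hjlast : min (j.val/k) (q-1) = q-1 := by
    rcases hj with ⟨hj1, -⟩ | ⟨-, -, hj1, -⟩ <;> exact (blk_last hk0).mpr (by omega)
  rcases hj with ⟨hj1, hj2⟩ | ⟨hjv, hju, hj1, hj2⟩
  · exact ⟨adj_iff.mpr ⟨Fin.ne_of_val_ne (by omega), hulast.trans hjlast.symm,
      by omega, by omega⟩,
      adj_iff.mpr ⟨Fin.ne_of_val_ne (by omega), hvlast.trans hjlast.symm,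
      by omega, by omega⟩⟩
  · exact ⟨adj_iff.mpr ⟨Ne.symm hju, hulast.trans hjlast.symm, by omega, by omega⟩,
      adj_iff.mpr ⟨Ne.symm hjv, hvlast.trans hjlast.symm, by omega, by omega⟩⟩

lemma not_dense {k q r n : ℕ} (hk : 2 ≤ k) (hq : 1 ≤ q) (hr : r < k) (hn : n = k*q + r) :
    ¬ kDense (dGraph k q r n) (k+1) := by
  have hk0 : 0 < k := by omega
  have hqk : k*(q-1) + k = k*q := by
    have h1 : q - 1 + 1 = q := by omega
    rw [← Nat.mul_succ, Nat.succ_eq_add_one, h1]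
  have hult : k*q - 1 < n := by omega
  have hvlt : k*(q-1) < n := by omega
  set u : Fin n := ⟨k*q - 1, hult⟩ with hu
  set v : Fin n := ⟨k*(q-1), hvlt⟩ with hv
  have huval : u.val = k*q - 1 := rfl
  have hvval : v.val = k*(q-1) := rfl
  have huv : (dGraph k q r n).Adj u v :=
    adj_iff.mpr ⟨Fin.ne_of_val_ne (by omega),
      ((blk_last hk0).mpr (by omega)).trans ((blk_last hk0).mpr (by omega)).symm,
      by omega, by omega⟩
  intro hd
  have hle := hd u v huv
  have hsub : ((dGraph k q r n).neighborSet u ∩ (dGraph k q r n).neighborSet v)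
      ⊆ ↑(((IcoF n (k*(q-1)) (k*q)).erase u).erase v) := by
    intro j hj
    obtain ⟨hj1, hj2⟩ := hj
    rw [SimpleGraph.mem_neighborSet] at hj1 hj2
    obtain ⟨hne1, hblk1, hF1, hF2⟩ := adj_iff.mp hj1
    obtain ⟨hne2, hblk2, -, -⟩ := adj_iff.mp hj2
    have hulast : min (u.val/k) (q-1) = q-1 := (blk_last hk0).mpr (by omega)
    have hjlo : k*(q-1) ≤ j.val := (blk_last hk0).mp (hblk1.symm.trans hulast)
    have hjhi : j.val < k*q := by
      rcases Nat.eq_zero_or_pos r with h0 | h0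
      · have := j.isLt; omega
      · omega
    rw [Finset.mem_coe, Finset.mem_erase, Finset.mem_erase, mem_IcoF]
    exact ⟨Ne.symm hne2, Ne.symm hne1, hjlo, hjhi⟩
  have hcard : (((IcoF n (k*(q-1)) (k*q)).erase u).erase v).card = k - 2 := by
    rw [Finset.card_erase_of_mem
        (Finset.mem_erase.mpr ⟨Fin.ne_of_val_ne (by omega),
          mem_IcoF.mpr ⟨by omega, by omega⟩⟩),
      Finset.card_erase_of_mem (mem_IcoF.mpr ⟨by omega, by omega⟩),
      card_IcoF (by omega)]
    omega
  have h1 := Set.ncard_le_ncard hsub (Set.toFinite _)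
  rw [Set.ncard_coe_finset, hcard] at h1
  omega

/-- For 2 ≤ k ≤ n with n = kq + r, 0 ≤ r < k, there is a k*-dense graph on n
vertices with q·C(k,2) + C(r,2) + r(k−r) edges. -/
theorem exists_kStarDense_with_edges (k n q r : ℕ) (hk : 2 ≤ k) (hkn : k ≤ n)
    (hqr : n = k * q + r) (hr : r < k) :
    ∃ G : SimpleGraph (Fin n), kStarDense G k ∧
      G.edgeSet.ncard = q * Nat.choose k 2 + Nat.choose r 2 + r * (k - r) := by
  have hq : 1 ≤ q := by
    rcases q with _ | q
    · simp at hqr; omega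
    · omega
  refine ⟨dGraph k q r n, ⟨?_, not_dense hk hq hr hqr⟩, ?_⟩
  · intro u v huv
    by_cases ha : u.val < k*q <;> by_cases hb : v.val < k*q
    · exact caseA hk hq hr hqr huv ha hb
    · push_neg at hb; exact caseB hk hq hr hqr huv ha hb
    · push_neg at ha; rw [Set.inter_comm]; exact caseB hk hq hr hqr huv.symm hb ha
    · push_neg at ha hb; exact caseC hk hq hr hqr huv ha hb
  · rw [← SimpleGraph.coe_edgeFinset, Set.ncard_coe_finset, edge_card hk hq hr hqr]
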